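/- Let X₁, X₂, … be independent real random variables with uniformly bounded moments, and suppose m_n = √E[(1/n)Σ_{i=1}^n X_i²] is bounded away from 0. Then the sequence W_n = (X₁/√n, …, X_n/√n) is balanced, i.e., m_n, n²μ₃(w_n²), and n²μ₄(w_n²) are bounded, where w_n = ‖W_n‖. -/

import Mathlib

open MeasureTheory Finset

section Aux

variable {Ω : Type*} [MeasurableSpace Ω] {μ : Measure Ω} [IsProbabilityMeasure μ]

lemma aux_step (s z : Ω → ℝ) (hsz : ProbabilityTheory.IndepFun s z μ)
    (hIs : ∀ k ≤ 4, Integrable (fun ω => s ω ^ k) μ)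
    (hIz : ∀ k : ℕ, Integrable (fun ω => z ω ^ k) μ)
    (hs1 : ∫ ω, s ω ∂μ = 0) (hz1 : ∫ ω, z ω ∂μ = 0) :
    (∀ k ≤ 4, Integrable (fun ω => (s ω + z ω) ^ k) μ)
    ∧ (∫ ω, (s ω + z ω) ∂μ = 0)
    ∧ (∫ ω, (s ω + z ω) ^ 2 ∂μ = ∫ ω, s ω ^ 2 ∂μ + ∫ ω, z ω ^ 2 ∂μ)
    ∧ (∫ ω, (s ω + z ω) ^ 3 ∂μ = ∫ ω, s ω ^ 3 ∂μ + ∫ ω, z ω ^ 3 ∂μ)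
    ∧ (∫ ω, (s ω + z ω) ^ 4 ∂μ
        = ∫ ω, s ω ^ 4 ∂μ + 6 * ((∫ ω, s ω ^ 2 ∂μ) * ∫ ω, z ω ^ 2 ∂μ)
          + ∫ ω, z ω ^ 4 ∂μ) := by
  have hpow : ∀ a b : ℕ,
      ProbabilityTheory.IndepFun (fun ω => s ω ^ a) (fun ω => z ω ^ b) μ :=
    fun a b => hsz.comp (measurable_id.pow_const a) (measurable_id.pow_const b)
  have hmulint : ∀ a b : ℕ, a ≤ 4 → Integrable (fun ω => s ω ^ a * z ω ^ b) μ :=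
    fun a b ha => (hpow a b).integrable_mul (hIs a ha) (hIz b)
  have hfact : ∀ a b : ℕ, a ≤ 4 →
      ∫ ω, s ω ^ a * z ω ^ b ∂μ = (∫ ω, s ω ^ a ∂μ) * ∫ ω, z ω ^ b ∂μ :=
    fun a b ha => (hpow a b).integral_fun_mul_eq_mul_integral (hIs a ha).aestronglyMeasurable (hIz b).aestronglyMeasurable
  have hint : ∀ k ≤ 4, Integrable (fun ω => (s ω + z ω) ^ k) μ := by
    intro k hk
    have h1 : (fun ω => (s ω + z ω) ^ k)
        = fun ω => ∑ m ∈ range (k + 1), s ω ^ m * z ω ^ (k - m) * (k.choose m : ℝ) := by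
      funext ω; rw [add_pow]
    rw [h1]
    exact integrable_finset_sum _ fun m hm =>
      (hmulint m (k - m) (le_trans (Nat.lt_succ_iff.mp (mem_range.mp hm)) hk)).mul_const _
  have hexp : ∀ k, k ≤ 4 → ∫ ω, (s ω + z ω) ^ k ∂μ
      = ∑ m ∈ range (k + 1),
          (∫ ω, s ω ^ m ∂μ) * (∫ ω, z ω ^ (k - m) ∂μ) * (k.choose m : ℝ) := by
    intro k hk
    have h1 : (fun ω => (s ω + z ω) ^ k)
        = fun ω => ∑ m ∈ range (k + 1), s ω ^ m * z ω ^ (k - m) * (k.choose m : ℝ) := by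
      funext ω; rw [add_pow]
    calc ∫ ω, (s ω + z ω) ^ k ∂μ
        = ∫ ω, ∑ m ∈ range (k + 1), s ω ^ m * z ω ^ (k - m) * (k.choose m : ℝ) ∂μ := by
          rw [h1]
      _ = ∑ m ∈ range (k + 1), ∫ ω, s ω ^ m * z ω ^ (k - m) * (k.choose m : ℝ) ∂μ :=
          integral_finset_sum _ fun m hm =>
            (hmulint m (k - m) (le_trans (Nat.lt_succ_iff.mp (mem_range.mp hm)) hk)).mul_const _
      _ = ∑ m ∈ range (k + 1),
            (∫ ω, s ω ^ m ∂μ) * (∫ ω, z ω ^ (k - m) ∂μ) * (k.choose m : ℝ) := by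
          refine Finset.sum_congr rfl fun m hm => ?_
          rw [integral_mul_const,
            hfact m (k - m) (le_trans (Nat.lt_succ_iff.mp (mem_range.mp hm)) hk)]
  have hs0 : ∫ ω, s ω ^ 0 ∂μ = 1 := by simp
  have hz0 : ∫ ω, z ω ^ 0 ∂μ = 1 := by simp
  refine ⟨hint, ?_, ?_, ?_, ?_⟩
  · rw [integral_add (by simpa using hIs 1 (by norm_num)) (by simpa using hIz 1), hs1, hz1]
    ring
  · rw [hexp 2 (by norm_num)]
    simp [Finset.sum_range_succ, hs0, hz0, hs1, hz1]
    ring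
  · rw [hexp 3 (by norm_num)]
    simp [Finset.sum_range_succ, hs0, hz0, hs1, hz1]
    ring
  · rw [hexp 4 (by norm_num)]
    simp [Finset.sum_range_succ, hs0, hz0, hs1, hz1]
    norm_num [Nat.choose]
    ring

lemma aux_sum_moments (Z : ℕ → Ω → ℝ) (hmeasZ : ∀ i, Measurable (Z i))
    (hindepZ : ProbabilityTheory.iIndepFun Z μ)
    (hintZ : ∀ i k, Integrable (fun ω => (Z i ω) ^ k) μ)
    (hzero : ∀ i, ∫ ω, Z i ω ∂μ = 0)
    (D : ℝ) (hD : 1 ≤ D) (hbound : ∀ i, ∀ k ≤ 4, |∫ ω, (Z i ω) ^ k ∂μ| ≤ D) :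
    ∀ n : ℕ, (∀ k ≤ 4, Integrable (fun ω => (∑ i ∈ range n, Z i ω) ^ k) μ)
      ∧ (∫ ω, ∑ i ∈ range n, Z i ω ∂μ = 0)
      ∧ |∫ ω, (∑ i ∈ range n, Z i ω) ^ 2 ∂μ| ≤ n * D
      ∧ |∫ ω, (∑ i ∈ range n, Z i ω) ^ 3 ∂μ| ≤ n * D
      ∧ |∫ ω, (∑ i ∈ range n, Z i ω) ^ 4 ∂μ| ≤ (n : ℝ) ^ 2 * (7 * D ^ 2) := by
  intro n
  induction n with
  | zero =>
      refine ⟨fun k hk => ?_, ?_, ?_, ?_, ?_⟩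
      · simpa using integrable_const ((0:ℝ) ^ k)
      all_goals simp
  | succ n ih =>
      obtain ⟨ihInt, ih1, ih2, ih3, ih4⟩ := ih
      have hsum_eq : (∑ j ∈ range n, Z j) = fun ω => ∑ j ∈ range n, Z j ω := by
        funext ω; simp
      have hsz : ProbabilityTheory.IndepFun (fun ω => ∑ j ∈ range n, Z j ω) (Z n) μ := by
        have h := hindepZ.indepFun_sum_range_succ hmeasZ n
        rwa [hsum_eq] at h
      obtain ⟨hint', hI1, hI2, hI3, hI4⟩ :=
        aux_step (fun ω => ∑ j ∈ range n, Z j ω) (Z n) hsz ihInt (hintZ n) ih1 (hzero n)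
      have hnn : (0:ℝ) ≤ (n : ℝ) := Nat.cast_nonneg n
      refine ⟨?_, ?_, ?_, ?_, ?_⟩
      · intro k hk
        simp only [Finset.sum_range_succ]
        exact hint' k hk
      · simp only [Finset.sum_range_succ]
        exact hI1
      · simp only [Finset.sum_range_succ]
        rw [hI2]
        have habs := abs_add_le (∫ ω, (∑ j ∈ range n, Z j ω) ^ 2 ∂μ) (∫ ω, Z n ω ^ 2 ∂μ)
        have hb2 := hbound n 2 (by norm_num)
        push_cast
        linarith
      · simp only [Finset.sum_range_succ]
        rw [hI3]
        have habs := abs_add_le (∫ ω, (∑ j ∈ range n, Z j ω) ^ 3 ∂μ) (∫ ω, Z n ω ^ 3 ∂μ)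
        have hb3 := hbound n 3 (by norm_num)
        push_cast
        linarith
      · simp only [Finset.sum_range_succ]
        rw [hI4]
        set a := ∫ ω, (∑ j ∈ range n, Z j ω) ^ 4 ∂μ with ha
        set b := ∫ ω, (∑ j ∈ range n, Z j ω) ^ 2 ∂μ with hbb
        set c := ∫ ω, Z n ω ^ 2 ∂μ with hc
        set d := ∫ ω, Z n ω ^ 4 ∂μ with hd
        have habs : |a + 6 * (b * c) + d| ≤ |a| + 6 * (|b| * |c|) + |d| := by
          calc |a + 6 * (b * c) + d| ≤ |a + 6 * (b * c)| + |d| := abs_add_le _ _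
            _ ≤ |a| + |6 * (b * c)| + |d| := by
                have := abs_add_le a (6 * (b * c))
                linarith
            _ = |a| + 6 * (|b| * |c|) + |d| := by
                rw [abs_mul, abs_mul]
                norm_num
        have hb2 := hbound n 2 (by norm_num)
        have hb4 := hbound n 4 (by norm_num)
        have hbc : |b| * |c| ≤ ((n : ℝ) * D) * D :=
          mul_le_mul ih2 hb2 (abs_nonneg _) (by positivity)
        have hDD : D ≤ D ^ 2 := by nlinarith
        push_cast
        nlinarith [abs_nonneg a, abs_nonneg d, sq_nonneg D]

end Aux

/-- For independent `X_i` with uniformly bounded moments, if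
`m_n = √E[(1/n)Σ X_i²]` is bounded away from `0`, then
`W_n = (X₁/√n, …, X_n/√n)` is balanced: `m_n`, `n²μ₃(w_n²)` and `n²μ₄(w_n²)`
are bounded. -/
theorem normalized_sequence_balanced
    {Ω : Type*} [MeasurableSpace Ω] (μ : Measure Ω) [IsProbabilityMeasure μ]
    (X : ℕ → Ω → ℝ) (hmeas : ∀ i, Measurable (X i))
    (hindep : ProbabilityTheory.iIndepFun X μ)
    (hintk : ∀ i k, Integrable (fun ω => (X i ω)^k) μ)
    (hmom : ∀ k : ℕ, ∃ C : ℝ, ∀ i, |∫ ω, (X i ω)^k ∂μ| ≤ C)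
    (wsq : ℕ → Ω → ℝ)
    (hwsq : ∀ n ω, wsq n ω = (1/(n:ℝ)) * ∑ i ∈ Finset.range n, (X i ω)^2)
    (m : ℕ → ℝ) (hm : ∀ n, m n = Real.sqrt (∫ ω, wsq n ω ∂μ))
    (b : ℝ) (hb : 0 < b) (hbm : ∀ n : ℕ, 1 ≤ n → b < m n) :
    (∃ C : ℝ, ∀ n : ℕ, 1 ≤ n → m n ≤ C)
    ∧ (∃ C : ℝ, ∀ n : ℕ, 1 ≤ n →
        |(n:ℝ)^2 * ∫ ω, (wsq n ω - (m n)^2)^3 ∂μ| ≤ C)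
    ∧ (∃ C : ℝ, ∀ n : ℕ, 1 ≤ n →
        |(n:ℝ)^2 * ∫ ω, (wsq n ω - (m n)^2)^4 ∂μ| ≤ C) := by
  classical
  obtain ⟨c2, hc2⟩ := hmom 2
  obtain ⟨c4, hc4⟩ := hmom 4
  obtain ⟨c6, hc6⟩ := hmom 6
  obtain ⟨c8, hc8⟩ := hmom 8
  set C : ℝ := 1 + |c2| + |c4| + |c6| + |c8| with hCdef
  have hC1 : 1 ≤ C := by
    have := abs_nonneg c2; have := abs_nonneg c4
    have := abs_nonneg c6; have := abs_nonneg c8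
    simp only [hCdef]; linarith
  have hC0 : 0 ≤ C := le_trans zero_le_one hC1
  have hCX : ∀ i, ∀ j : ℕ, j ≤ 4 → |∫ ω, (X i ω) ^ (2 * j) ∂μ| ≤ C := by
    intro i j hj
    interval_cases j
    · simpa using hC1
    · have := hc2 i
      have h : c2 ≤ C := by
        have := le_abs_self c2
        have := abs_nonneg c4; have := abs_nonneg c6; have := abs_nonneg c8
        simp only [hCdef]; linarith
      norm_num
      linarith [hc2 i]
    · have h : c4 ≤ C := by
        have := le_abs_self c4
        have := abs_nonneg c2; have := abs_nonneg c6; have := abs_nonneg c8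
        simp only [hCdef]; linarith
      norm_num
      linarith [hc4 i]
    · have h : c6 ≤ C := by
        have := le_abs_self c6
        have := abs_nonneg c2; have := abs_nonneg c4; have := abs_nonneg c8
        simp only [hCdef]; linarith
      norm_num
      linarith [hc6 i]
    · have h : c8 ≤ C := by
        have := le_abs_self c8
        have := abs_nonneg c2; have := abs_nonneg c4; have := abs_nonneg c6
        simp only [hCdef]; linarith
      norm_num
      linarith [hc8 i]
  have hcabs : ∀ i, |∫ ω, (X i ω) ^ 2 ∂μ| ≤ C := by
    intro i
    have h := hCX i 1 (by norm_num)
    norm_num at h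
    exact h
  -- centered variables
  set Z : ℕ → Ω → ℝ := fun i ω => (X i ω) ^ 2 - ∫ ω', (X i ω') ^ 2 ∂μ with hZdef
  have hZmeas : ∀ i, Measurable (Z i) := fun i =>
    ((hmeas i).pow_const 2).sub_const _
  have hZindep : ProbabilityTheory.iIndepFun Z μ :=
    hindep.comp (fun i x => x ^ 2 - ∫ ω', (X i ω') ^ 2 ∂μ)
      (fun i => (measurable_id.pow_const 2).sub_const _)
  have hZexpand : ∀ i k (ω : Ω), Z i ω ^ k
      = ∑ j ∈ range (k + 1),
          ((-1 : ℝ) ^ (j + k) * (∫ ω', (X i ω') ^ 2 ∂μ) ^ (k - j) * (k.choose j : ℝ))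
            * (X i ω) ^ (2 * j) := by
    intro i k ω
    simp only [hZdef]
    rw [sub_pow]
    refine Finset.sum_congr rfl fun j hj => ?_
    rw [pow_mul]
    ring
  have hZint : ∀ i k, Integrable (fun ω => Z i ω ^ k) μ := by
    intro i k
    have h : (fun ω => Z i ω ^ k)
        = fun ω => ∑ j ∈ range (k + 1),
            ((-1 : ℝ) ^ (j + k) * (∫ ω', (X i ω') ^ 2 ∂μ) ^ (k - j) * (k.choose j : ℝ))
              * (X i ω) ^ (2 * j) := funext (hZexpand i k)
    rw [h]
    exact integrable_finset_sum _ fun j hj => (hintk i (2 * j)).const_mul _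
  have hZzero : ∀ i, ∫ ω, Z i ω ∂μ = 0 := by
    intro i
    simp only [hZdef]
    rw [integral_sub (hintk i 2) (integrable_const _)]
    simp
  have hZbound : ∀ i, ∀ k ≤ 4, |∫ ω, Z i ω ^ k ∂μ| ≤ 16 * C ^ 5 := by
    intro i k hk
    have hval : ∫ ω, Z i ω ^ k ∂μ
        = ∑ j ∈ range (k + 1),
            ((-1 : ℝ) ^ (j + k) * (∫ ω', (X i ω') ^ 2 ∂μ) ^ (k - j) * (k.choose j : ℝ))
              * ∫ ω, (X i ω) ^ (2 * j) ∂μ := by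
      simp only [hZexpand]
      rw [integral_finset_sum _ fun j hj => (hintk i (2 * j)).const_mul _]
      exact Finset.sum_congr rfl fun j hj => integral_const_mul _ _
    rw [hval]
    calc |∑ j ∈ range (k + 1),
            ((-1 : ℝ) ^ (j + k) * (∫ ω', (X i ω') ^ 2 ∂μ) ^ (k - j) * (k.choose j : ℝ))
              * ∫ ω, (X i ω) ^ (2 * j) ∂μ|
        ≤ ∑ j ∈ range (k + 1),
            |((-1 : ℝ) ^ (j + k) * (∫ ω', (X i ω') ^ 2 ∂μ) ^ (k - j) * (k.choose j : ℝ))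
              * ∫ ω, (X i ω) ^ (2 * j) ∂μ| := Finset.abs_sum_le_sum_abs _ _
      _ ≤ ∑ j ∈ range (k + 1), C ^ 5 * (k.choose j : ℝ) := by
          refine Finset.sum_le_sum fun j hj => ?_
          have hjk : j ≤ k := Nat.lt_succ_iff.mp (mem_range.mp hj)
          have hj4 : j ≤ 4 := le_trans hjk hk
          have hI : |∫ ω, (X i ω) ^ (2 * j) ∂μ| ≤ C := hCX i j hj4
          have hcpow : |∫ ω', (X i ω') ^ 2 ∂μ| ^ (k - j) ≤ C ^ (k - j) :=
            pow_le_pow_left₀ (abs_nonneg _) (hcabs i) _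
          have hCk : C ^ (k - j) ≤ C ^ 4 :=
            pow_le_pow_right₀ hC1 (by omega)
          rw [abs_mul, abs_mul, abs_mul, abs_pow, abs_pow, abs_neg, abs_one, one_pow, Nat.abs_cast]
          have : |∫ ω', (X i ω') ^ 2 ∂μ| ^ (k - j) * (k.choose j : ℝ)
              * |∫ ω, (X i ω) ^ (2 * j) ∂μ| ≤ C ^ 4 * (k.choose j : ℝ) * C :=
            mul_le_mul (mul_le_mul_of_nonneg_right (hcpow.trans hCk)
              (by positivity)) hI (abs_nonneg _) (by positivity)
          calc 1 * |∫ ω', (X i ω') ^ 2 ∂μ| ^ (k - j) * (k.choose j : ℝ)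
                * |∫ ω, (X i ω) ^ (2 * j) ∂μ|
              = |∫ ω', (X i ω') ^ 2 ∂μ| ^ (k - j) * (k.choose j : ℝ)
                * |∫ ω, (X i ω) ^ (2 * j) ∂μ| := by ring
            _ ≤ C ^ 4 * (k.choose j : ℝ) * C := this
            _ = C ^ 5 * (k.choose j : ℝ) := by ring
      _ = C ^ 5 * (2 : ℝ) ^ k := by
          rw [← Finset.mul_sum]
          congr 1
          rw [← Nat.cast_sum, Nat.sum_range_choose]
          push_cast
          ring
      _ ≤ 16 * C ^ 5 := by
          have h2 : (2 : ℝ) ^ k ≤ 2 ^ 4 := pow_le_pow_right₀ one_le_two hk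
          have hC5 : (0 : ℝ) ≤ C ^ 5 := by positivity
          nlinarith
  set D : ℝ := 16 * C ^ 5 with hDdef
  have hD1 : 1 ≤ D := by
    have h5 : (1 : ℝ) ≤ C ^ 5 := by
      have := pow_le_pow_left₀ zero_le_one hC1 5
      simpa using this
    simp only [hDdef]; nlinarith
  have main := aux_sum_moments Z hZmeas hZindep hZint hZzero D hD1 hZbound
  -- expectation of wsq
  have hEwsq : ∀ n : ℕ, ∫ ω, wsq n ω ∂μ
      = (1 / (n : ℝ)) * ∑ i ∈ range n, ∫ ω, (X i ω) ^ 2 ∂μ := by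
    intro n
    simp only [hwsq]
    rw [integral_const_mul, integral_finset_sum _ fun i _ => hintk i 2]
  have hEwsq_nonneg : ∀ n : ℕ, 0 ≤ ∫ ω, wsq n ω ∂μ := by
    intro n
    rw [hEwsq n]
    apply mul_nonneg (by positivity)
    exact Finset.sum_nonneg fun i _ => integral_nonneg fun ω => sq_nonneg _
  have hm2 : ∀ n : ℕ, m n ^ 2 = ∫ ω, wsq n ω ∂μ := fun n => by
    rw [hm n]; exact Real.sq_sqrt (hEwsq_nonneg n)
  have hdiff : ∀ n : ℕ, ∀ ω : Ω, wsq n ω - m n ^ 2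
      = (1 / (n : ℝ)) * ∑ i ∈ range n, Z i ω := by
    intro n ω
    rw [hm2 n, hEwsq n, hwsq n ω, ← mul_sub]
    congr 1
    rw [← Finset.sum_sub_distrib]
  refine ⟨⟨Real.sqrt C, fun n hn => ?_⟩, ⟨D, fun n hn => ?_⟩, ⟨7 * D ^ 2, fun n hn => ?_⟩⟩
  · rw [hm n]
    apply Real.sqrt_le_sqrt
    rw [hEwsq n]
    have hn' : (1 : ℝ) ≤ (n : ℝ) := by exact_mod_cast hn
    have hsum : ∑ i ∈ range n, ∫ ω, (X i ω) ^ 2 ∂μ ≤ (n : ℝ) * C := by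
      calc ∑ i ∈ range n, ∫ ω, (X i ω) ^ 2 ∂μ
          ≤ ∑ i ∈ range n, C :=
            Finset.sum_le_sum fun i _ => (le_abs_self _).trans (hcabs i)
        _ = (n : ℝ) * C := by simp [mul_comm]
    calc (1 / (n : ℝ)) * ∑ i ∈ range n, ∫ ω, (X i ω) ^ 2 ∂μ
        ≤ (1 / (n : ℝ)) * ((n : ℝ) * C) := by
          apply mul_le_mul_of_nonneg_left hsum (by positivity)
      _ = C := by field_simp
  · have hn' : (1 : ℝ) ≤ (n : ℝ) := by exact_mod_cast hn
    have hn0 : (n : ℝ) ≠ 0 := by positivity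
    obtain ⟨_, _, _, h3, _⟩ := main n
    have heq : ∫ ω, (wsq n ω - m n ^ 2) ^ 3 ∂μ
        = (1 / (n : ℝ)) ^ 3 * ∫ ω, (∑ i ∈ range n, Z i ω) ^ 3 ∂μ := by
      simp only [hdiff n, mul_pow]
      exact integral_const_mul _ _
    rw [heq, show (n : ℝ) ^ 2 * ((1 / (n : ℝ)) ^ 3 * ∫ ω, (∑ i ∈ range n, Z i ω) ^ 3 ∂μ)
        = (1 / (n : ℝ)) * ∫ ω, (∑ i ∈ range n, Z i ω) ^ 3 ∂μ from by field_simp]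
    rw [abs_mul, abs_of_nonneg (by positivity : (0:ℝ) ≤ 1 / (n : ℝ))]
    calc (1 / (n : ℝ)) * |∫ ω, (∑ i ∈ range n, Z i ω) ^ 3 ∂μ|
        ≤ (1 / (n : ℝ)) * ((n : ℝ) * D) := by
          apply mul_le_mul_of_nonneg_left h3 (by positivity)
      _ = D := by field_simp
  · have hn' : (1 : ℝ) ≤ (n : ℝ) := by exact_mod_cast hn
    have hn0 : (n : ℝ) ≠ 0 := by positivity
    obtain ⟨_, _, _, _, h4⟩ := main n
    have heq : ∫ ω, (wsq n ω - m n ^ 2) ^ 4 ∂μ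
        = (1 / (n : ℝ)) ^ 4 * ∫ ω, (∑ i ∈ range n, Z i ω) ^ 4 ∂μ := by
      simp only [hdiff n, mul_pow]
      exact integral_const_mul _ _
    rw [heq, show (n : ℝ) ^ 2 * ((1 / (n : ℝ)) ^ 4 * ∫ ω, (∑ i ∈ range n, Z i ω) ^ 4 ∂μ)
        = (1 / (n : ℝ)) ^ 2 * ∫ ω, (∑ i ∈ range n, Z i ω) ^ 4 ∂μ from by field_simp]
    rw [abs_mul, abs_of_nonneg (by positivity : (0:ℝ) ≤ (1 / (n : ℝ)) ^ 2)]
    calc (1 / (n : ℝ)) ^ 2 * |∫ ω, (∑ i ∈ range n, Z i ω) ^ 4 ∂μ|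
        ≤ (1 / (n : ℝ)) ^ 2 * ((n : ℝ) ^ 2 * (7 * D ^ 2)) := by
          apply mul_le_mul_of_nonneg_left h4 (by positivity)
      _ = 7 * D ^ 2 := by field_simp
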